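/- Let g, b, g_sh, b_sh, σ ∈ ℝ and τ ∈ ℝ with τ > 0, and set y := g + i·b and y_sh := g_sh + i·b_sh (complex numbers). For complex voltages V_k, V_m ∈ ℂ define the branch current I_km := (y/τ)·((1/τ)·V_k − e^{iσ}·V_m) + V_k·y_sh/(2τ²), and define v_k := |V_k|², v_m := |V_m|², c := Re(V_k · conj(V_m)), s := Im(V_k · conj(V_m)). Then |I_km|² = α·v_k + β·v_m + γ·c + ζ·s, where α := (1/τ⁴)·((g² + b²) + (g·g_sh + b·b_sh) + (g_sh² + b_sh²)/4), β := (g² + b²)/τ², γ := (1/τ³)·(cos σ·(−2(g² + b²) − (g·g_sh + b·b_sh)) + sin σ·(b·g_sh − g·b_sh)), and ζ := (1/τ³)·(sin σ·(−2(g² + b²) − (g·g_sh + b·b_sh)) − cos σ·(b·g_sh − g·b_sh)). -/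

import Mathlib

open Complex

/-- the squared magnitude of the branch current
`I_km = (y/τ)((1/τ)V_k − e^{iσ}V_m) + V_k·y_sh/(2τ²)` is the linear function
`α v_k + β v_m + γ c + ζ s` of the variables `v_k = |V_k|²`, `v_m = |V_m|²`,
`c = Re(V_k conj(V_m))`, `s = Im(V_k conj(V_m))`. -/
theorem i2_linear_definition (g b gsh bsh σ τ : ℝ) (hτ : 0 < τ)
    (Vk Vm : ℂ) :
    let y : ℂ := (g : ℂ) + Complex.I * (b : ℂ)
    let ysh : ℂ := (gsh : ℂ) + Complex.I * (bsh : ℂ)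
    let Ikm : ℂ := (y / (τ : ℂ)) * ((1 / (τ : ℂ)) * Vk - Complex.exp (Complex.I * (σ : ℂ)) * Vm)
      + Vk * ysh / (2 * (τ : ℂ) ^ 2)
    let vk : ℝ := ‖Vk‖ ^ 2
    let vm : ℝ := ‖Vm‖ ^ 2
    let c : ℝ := (Vk * (starRingEnd ℂ) Vm).re
    let s : ℝ := (Vk * (starRingEnd ℂ) Vm).im
    let α : ℝ := (1 / τ ^ 4) * ((g ^ 2 + b ^ 2) + (g * gsh + b * bsh) + (gsh ^ 2 + bsh ^ 2) / 4)
    let β : ℝ := (g ^ 2 + b ^ 2) / τ ^ 2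
    let γ : ℝ := (1 / τ ^ 3) *
      (Real.cos σ * (-2 * (g ^ 2 + b ^ 2) - (g * gsh + b * bsh)) +
        Real.sin σ * (b * gsh - g * bsh))
    let ζ : ℝ := (1 / τ ^ 3) *
      (Real.sin σ * (-2 * (g ^ 2 + b ^ 2) - (g * gsh + b * bsh)) -
        Real.cos σ * (b * gsh - g * bsh))
    ‖Ikm‖ ^ 2 = α * vk + β * vm + γ * c + ζ * s := by
  intro y ysh Ikm vk vm c s α β γ ζ
  have hτ0 : (τ:ℂ) ≠ 0 := by exact_mod_cast hτ.ne'
  have hτ0' : τ ≠ 0 := hτ.ne'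
  have hexp : Complex.exp (Complex.I * (σ : ℂ)) = (Real.cos σ : ℂ) + (Real.sin σ : ℂ) * Complex.I := by
    rw [mul_comm, Complex.exp_mul_I, Complex.ofReal_cos, Complex.ofReal_sin]
  have key : Ikm = ((y + ysh / 2) / (τ:ℂ) ^ 2) * Vk
      + (-(y * Complex.exp (Complex.I * (σ:ℂ))) / τ) * Vm := by
    simp only [Ikm]
    field_simp
    ring
  set A : ℂ := (y + ysh / 2) / (τ:ℂ) ^ 2 with hA
  set B : ℂ := -(y * Complex.exp (Complex.I * (σ:ℂ))) / τ with hB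
  rw [key, Complex.sq_norm, Complex.normSq_add]
  have h1 : Complex.normSq (A * Vk) = Complex.normSq A * vk := by
    simp only [vk, Complex.normSq_mul, Complex.sq_norm]
  have h2 : Complex.normSq (B * Vm) = Complex.normSq B * vm := by
    simp only [vm, Complex.normSq_mul, Complex.sq_norm]
  have h3 : (A * Vk * (starRingEnd ℂ) (B * Vm)).re
      = (A * (starRingEnd ℂ) B).re * c - (A * (starRingEnd ℂ) B).im * s := by
    have h : A * Vk * (starRingEnd ℂ) (B * Vm)
        = (A * (starRingEnd ℂ) B) * (Vk * (starRingEnd ℂ) Vm) := by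
      rw [map_mul]; ring
    rw [h, Complex.mul_re]
  rw [h1, h2, h3]
  have hcs := Real.sin_sq_add_cos_sq σ
  have hnA : Complex.normSq A = α := by
    simp only [hA, α, y, ysh, ← Complex.ofReal_pow, Complex.normSq_div,
      Complex.normSq_ofReal, Complex.normSq_apply, Complex.add_re, Complex.add_im,
      Complex.mul_re, Complex.mul_im, Complex.div_re, Complex.div_im,
      Complex.ofReal_re, Complex.ofReal_im, Complex.I_re, Complex.I_im, Complex.re_ofNat, Complex.im_ofNat]
    field_simp
    ring
  have hnB : Complex.normSq B = β := by
    simp only [hB, β, y, hexp, Complex.normSq_div, Complex.normSq_neg, Complex.normSq_mul,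
      Complex.normSq_ofReal, Complex.normSq_apply, Complex.add_re, Complex.add_im,
      Complex.mul_re, Complex.mul_im, Complex.neg_re, Complex.neg_im,
      Complex.div_ofReal_re, Complex.div_ofReal_im, Complex.ofReal_re, Complex.ofReal_im,
      Complex.I_re, Complex.I_im]
    field_simp
    linear_combination (g ^ 2 + b ^ 2) * hcs
  have hAB : A * (starRingEnd ℂ) B
      = (-((y + ysh / 2) * ((g:ℂ) - Complex.I * b)
          * ((Real.cos σ : ℂ) - (Real.sin σ : ℂ) * Complex.I))) / (τ:ℂ) ^ 3 := by
    have hy : (starRingEnd ℂ) y = (g:ℂ) - Complex.I * b := by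
      simp [y, Complex.ext_iff]
    have he : (starRingEnd ℂ) ((Real.cos σ : ℂ) + (Real.sin σ : ℂ) * Complex.I)
        = (Real.cos σ : ℂ) - (Real.sin σ : ℂ) * Complex.I := by
      simp [Complex.ext_iff]
    rw [hA, hB, hexp, map_div₀, map_neg, map_mul, hy, he, Complex.conj_ofReal]
    field_simp
  have hre : 2 * (A * (starRingEnd ℂ) B).re = γ := by
    rw [hAB]
    simp only [γ, y, ysh, ← Complex.ofReal_pow, Complex.div_ofReal_re, Complex.neg_re,
      Complex.add_re, Complex.add_im, Complex.sub_re, Complex.sub_im, Complex.mul_re,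
      Complex.mul_im, Complex.div_re, Complex.div_im, Complex.normSq_apply,
      Complex.ofReal_re, Complex.ofReal_im, Complex.I_re, Complex.I_im, Complex.re_ofNat, Complex.im_ofNat]
    field_simp
    ring
  have him : -2 * (A * (starRingEnd ℂ) B).im = ζ := by
    rw [hAB]
    simp only [ζ, y, ysh, ← Complex.ofReal_pow, Complex.div_ofReal_im, Complex.neg_im,
      Complex.add_re, Complex.add_im, Complex.sub_re, Complex.sub_im, Complex.mul_re,
      Complex.mul_im, Complex.div_re, Complex.div_im, Complex.normSq_apply,
      Complex.ofReal_re, Complex.ofReal_im, Complex.I_re, Complex.I_im, Complex.re_ofNat, Complex.im_ofNat]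
    field_simp
    ring
  rw [hnA, hnB, ← hre, ← him]
  ring
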